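/- arXiv:1111.2984 — 9 statements merged into one kernel-verified Lean document; each statement's English description precedes it below -/
import Mathlib

section
/- Let N ≥ 1 be a natural number and for each i ≥ 1 let P(i) denote the pair (fib i mod N, fib (i+1) mod N) of consecutive Fibonacci residues. If k ≥ 1 is the least index such that P(k) = P(r) for some r > k, then k = 1; in particular the first pair that repeats in the sequence P(1), P(2), P(3), … is the pair (1 mod N, 1 mod N). -/
theorem first_repeated_fib_pair (N : ℕ) (hN : 1 ≤ N)
    (P : ℕ → ZMod N × ZMod N)
    (hP : ∀ i, P i = ((Nat.fib i : ZMod N), (Nat.fib (i + 1) : ZMod N)))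
    (k : ℕ) (hk : 1 ≤ k)
    (hrep : ∃ r, k < r ∧ P k = P r)
    (hleast : ∀ j, 1 ≤ j → (∃ r, j < r ∧ P j = P r) → k ≤ j) :
    k = 1 ∧ P k = ((1 : ZMod N), (1 : ZMod N)) := by
  have hk1 : k = 1 := by
    by_contra h
    -- k ≥ 2
    obtain ⟨m, rfl⟩ : ∃ m, k = m + 2 := by
      rcases k with _ | _ | m
      · omega
      · omega
      · exact ⟨m, rfl⟩
    obtain ⟨r, hr, heq⟩ := hrep
    obtain ⟨t, rfl⟩ : ∃ t, r = t + 2 := ⟨r - 2, by omega⟩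
    have h1 : (Nat.fib (m + 2) : ZMod N) = (Nat.fib (t + 2) : ZMod N) := by
      have := congrArg Prod.fst heq
      simpa [hP] using this
    have h2 : (Nat.fib (m + 3) : ZMod N) = (Nat.fib (t + 3) : ZMod N) := by
      have := congrArg Prod.snd heq
      simpa [hP] using this
    have h0 : (Nat.fib (m + 1) : ZMod N) = (Nat.fib (t + 1) : ZMod N) := by
      have e1 : (Nat.fib (m + 3) : ZMod N) = Nat.fib (m + 1) + Nat.fib (m + 2) := by
        rw [show m + 3 = (m + 1) + 2 from rfl, Nat.fib_add_two]; push_cast; ring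
      have e2 : (Nat.fib (t + 3) : ZMod N) = Nat.fib (t + 1) + Nat.fib (t + 2) := by
        rw [show t + 3 = (t + 1) + 2 from rfl, Nat.fib_add_two]; push_cast; ring
      have := h2
      rw [e1, e2, h1] at this
      exact add_right_cancel this
    have hle := hleast (m + 1) (by omega) ⟨t + 1, by omega, by
      rw [hP, hP]
      exact Prod.ext h0 h1⟩
    omega
  subst hk1
  refine ⟨rfl, ?_⟩
  rw [hP]
  norm_num [Nat.fib_one, Nat.fib_two]
end

section
/- For every natural number N ≥ 1 there exists a natural number t with 1 < t ≤ N² + 1 such that fib t ≡ 1 (mod N) and fib (t+1) ≡ 1 (mod N). -/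
private def fpair (N n : ℕ) : ZMod N × ZMod N := ((Nat.fib n : ZMod N), (Nat.fib (n + 1) : ZMod N))

private lemma fpair_step (N n m : ℕ) (h : fpair N (n + 1) = fpair N (m + 1)) :
    fpair N n = fpair N m := by
  obtain ⟨h1, h2⟩ := Prod.mk.injEq .. ▸ h
  have hn : (Nat.fib n : ZMod N) = (Nat.fib (n + 2) : ZMod N) - (Nat.fib (n + 1) : ZMod N) := by
    rw [Nat.fib_add_two]; push_cast; ring
  have hm : (Nat.fib m : ZMod N) = (Nat.fib (m + 2) : ZMod N) - (Nat.fib (m + 1) : ZMod N) := by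
    rw [Nat.fib_add_two]; push_cast; ring
  simp only [fpair, Prod.mk.injEq] at h1 h2 ⊢
  constructor
  · rw [hn, hm]
    have : n + 1 + 1 = n + 2 := rfl
    rw [this] at h2
    have : m + 1 + 1 = m + 2 := rfl
    rw [this] at h2
    rw [h1, h2]
  · exact h1

private lemma fpair_down (N t : ℕ) : ∀ k, fpair N (1 + k) = fpair N (t + k) → fpair N 1 = fpair N t := by
  intro k
  induction k with
  | zero => simp
  | succ k ih =>
    intro h
    exact ih (fpair_step N (1 + k) (t + k) (by rwa [← Nat.add_assoc, ← Nat.add_assoc] at h))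

theorem fib_pair_one_one_repeats (N : ℕ) (hN : 1 ≤ N) :
    ∃ t : ℕ, 1 < t ∧ t ≤ N ^ 2 + 1 ∧
      (Nat.fib t : ZMod N) = 1 ∧ (Nat.fib (t + 1) : ZMod N) = 1 := by
  rcases eq_or_lt_of_le hN with h1 | h1
  · refine ⟨2, by norm_num, ?_, ?_, ?_⟩
    · rw [← h1]; norm_num
    · rw [← h1]; exact Subsingleton.elim _ _
    · rw [← h1]; exact Subsingleton.elim _ _
  · haveI : NeZero N := ⟨by omega⟩
    have hcard : (Fintype.card (ZMod N × ZMod N)) = N ^ 2 := by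
      simp [ZMod.card, sq]
    have hmaps : ∀ n ∈ Finset.Icc 1 (N ^ 2 + 1), fpair N n ∈ (Finset.univ : Finset (ZMod N × ZMod N)) := by
      intros; exact Finset.mem_univ _
    have hlt : (Finset.univ : Finset (ZMod N × ZMod N)).card < (Finset.Icc 1 (N ^ 2 + 1)).card := by
      rw [Finset.card_univ, hcard, Nat.card_Icc]
      omega
    obtain ⟨a, ha, b, hb, hab, heq⟩ :=
      Finset.exists_ne_map_eq_of_card_lt_of_maps_to hlt hmaps
    simp only [Finset.mem_Icc] at ha hb
    -- wlog a < b
    rcases lt_or_gt_of_ne hab with hlt' | hlt'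
    all_goals {
      first
      | (refine ⟨b - a + 1, by omega, by omega, ?_⟩
         have key : fpair N 1 = fpair N (b - a + 1) := by
           apply fpair_down N (b - a + 1) (a - 1)
           have e1 : 1 + (a - 1) = a := by omega
           have e2 : b - a + 1 + (a - 1) = b := by omega
           rw [e1, e2]; exact heq)
      | (refine ⟨a - b + 1, by omega, by omega, ?_⟩
         have key : fpair N 1 = fpair N (a - b + 1) := by
           apply fpair_down N (a - b + 1) (b - 1)
           have e1 : 1 + (b - 1) = b := by omega
           have e2 : a - b + 1 + (b - 1) = a := by omega
           rw [e1, e2]; exact heq.symm)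
      simp only [fpair, Prod.mk.injEq, show (1:ℕ)+1 = 2 from rfl, Nat.fib_one,
        Nat.fib_two, Nat.cast_one] at key
      exact ⟨key.1.symm, key.2.symm⟩
    }
end

section
/- For every natural number N ≥ 1, at least one of the first N² Fibonacci numbers is divisible by N; that is, there exists t with 1 ≤ t ≤ N² such that N divides fib t. -/
private lemma fib_pair_back {N : ℕ} {k m : ℕ}
    (h1 : (Nat.fib (k+1) : ZMod N) = Nat.fib (m+1))
    (h2 : (Nat.fib (k+2) : ZMod N) = Nat.fib (m+2)) :
    (Nat.fib k : ZMod N) = Nat.fib m ∧ (Nat.fib (k+1) : ZMod N) = Nat.fib (m+1) := by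
  refine ⟨?_, h1⟩
  have hk : (Nat.fib k : ZMod N) = (Nat.fib (k+2) : ZMod N) - Nat.fib (k+1) := by
    rw [Nat.fib_add_two]; push_cast; ring
  have hm : (Nat.fib m : ZMod N) = (Nat.fib (m+2) : ZMod N) - Nat.fib (m+1) := by
    rw [Nat.fib_add_two]; push_cast; ring
  rw [hk, hm, h1, h2]

private lemma fib_pair_shift {N : ℕ} (i d : ℕ)
    (h1 : (Nat.fib i : ZMod N) = Nat.fib (i+d))
    (h2 : (Nat.fib (i+1) : ZMod N) = Nat.fib (i+d+1)) :
    (Nat.fib 0 : ZMod N) = Nat.fib d ∧ (Nat.fib 1 : ZMod N) = Nat.fib (d+1) := by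
  induction i with
  | zero => exact ⟨by simpa using h1, by simpa using h2⟩
  | succ n ih =>
      have := fib_pair_back (N := N) (k := n) (m := n + d)
        (by have := h1; rw [show n+1+d = n+d+1 by ring] at this; exact this)
        (by have := h2; rw [show n+1+d+1 = n+d+2 by ring, show n+1+1 = n+2 by ring] at this; exact this)
      exact ih this.1 this.2

theorem exists_fib_divisible (N : ℕ) (hN : 1 ≤ N) :
    ∃ t : ℕ, 1 ≤ t ∧ t ≤ N ^ 2 ∧ N ∣ Nat.fib t := by
  haveI : NeZero N := ⟨by omega⟩
  set f : ℕ → ZMod N × ZMod N := fun k => (Nat.fib k, Nat.fib (k+1)) with hf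
  have hcard : (Finset.univ : Finset (ZMod N × ZMod N)).card < (Finset.range (N^2+1)).card := by
    simp [ZMod.card, sq]
  obtain ⟨i, hi, j, hj, hne, heq⟩ :=
    Finset.exists_ne_map_eq_of_card_lt_of_maps_to hcard
      (fun x _ => Finset.mem_univ (f x))
  wlog hij : i < j generalizing i j
  · exact this j hj i hi hne.symm heq.symm (by omega)
  have hi' : i < N^2 + 1 := Finset.mem_range.mp hi
  have hj' : j < N^2 + 1 := Finset.mem_range.mp hj
  set d := j - i with hd
  have hjd : j = i + d := by omega
  have h1 : (Nat.fib i : ZMod N) = Nat.fib (i+d) := by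
    have := congrArg Prod.fst heq; simpa [hf, hjd] using this
  have h2 : (Nat.fib (i+1) : ZMod N) = Nat.fib (i+d+1) := by
    have := congrArg Prod.snd heq; simpa [hf, hjd] using this
  obtain ⟨h0, -⟩ := fib_pair_shift i d h1 h2
  refine ⟨d, by omega, by omega, ?_⟩
  have : (Nat.fib d : ZMod N) = 0 := by simpa using h0.symm
  exact (ZMod.natCast_eq_zero_iff _ _).mp this
end

section
/- Let N > 2 be a natural number and t ≥ 1. If fib t ≡ 0 (mod N) and fib (t+1) ≡ 1 (mod N), then t is even. -/
lemma cassini (N : ℕ) : ∀ n : ℕ,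
    (Nat.fib n : ZMod N) * Nat.fib (n + 2) - (Nat.fib (n + 1))^2 = (-1)^(n+1) := by
  intro n
  induction n with
  | zero => simp
  | succ n ih =>
    have h2 : Nat.fib (n + 3) = Nat.fib (n + 1) + Nat.fib (n + 2) := Nat.fib_add_two
    have h1 : Nat.fib (n + 2) = Nat.fib n + Nat.fib (n + 1) := Nat.fib_add_two
    have key : ((Nat.fib (n+1) : ZMod N)) * Nat.fib (n + 3) - (Nat.fib (n + 2))^2
        = -((Nat.fib n : ZMod N) * Nat.fib (n + 2) - (Nat.fib (n + 1))^2) := by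
      rw [h2, h1]; push_cast; ring
    rw [show n + 1 + 2 = n + 3 from rfl, key, ih]
    ring

theorem fib_zero_one_even (N : ℕ) (hN : 2 < N) (t : ℕ) (ht : 1 ≤ t)
    (h0 : (Nat.fib t : ZMod N) = 0) (h1 : (Nat.fib (t + 1) : ZMod N) = 1) :
    Even t := by
  obtain ⟨n, rfl⟩ : ∃ n, t = n + 1 := ⟨t - 1, by omega⟩
  have key := cassini N n
  have hfib : (Nat.fib (n + 2) : ZMod N) = (Nat.fib n : ZMod N) + Nat.fib (n + 1) := by
    rw [Nat.fib_add_two]; push_cast; ring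
  rw [show n + 1 + 1 = n + 2 from rfl] at h1
  have hn : (Nat.fib n : ZMod N) = 1 := by
    rw [hfib, h0, add_zero] at h1; exact h1
  rw [hn, h1, h0] at key
  simp only [one_mul, one_pow, sub_zero] at key
  norm_num at key
  by_contra hodd
  have hodd' : Odd (n + 1) := Nat.not_even_iff_odd.mp hodd
  rw [hodd'.neg_one_pow] at key
  have h2 : ((2 : ℕ) : ZMod N) = 0 := by
    push_cast
    linear_combination key
  have hd := (ZMod.natCast_eq_zero_iff 2 N).mp h2
  have := Nat.le_of_dvd (by norm_num) hd
  omega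
end

section
/- Let N ≥ 1 and t ≥ 1 be natural numbers and let A₂ = !![1, 1; 1, 2] regarded as a matrix over ZMod N. Then A₂^t = 1 (the identity matrix over ZMod N) if and only if fib (2t) ≡ 0 (mod N) and fib (2t - 1) ≡ 1 (mod N). -/
lemma fibG_pow (N : ℕ) : ∀ n : ℕ,
    (!![0, 1; 1, 1] : Matrix (Fin 2) (Fin 2) (ZMod N)) ^ (n + 1) =
      !![(Nat.fib n : ZMod N), Nat.fib (n + 1); Nat.fib (n + 1), Nat.fib (n + 2)] := by
  intro n
  induction n with
  | zero => simp [pow_one]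
  | succ k ih =>
      rw [pow_succ, ih]
      ext i j
      fin_cases i <;> fin_cases j <;>
        simp [Matrix.mul_apply, Fin.sum_univ_two, Nat.fib_add_two] <;> push_cast <;> ring

theorem cat_map_pow_eq_one_iff (N : ℕ) (hN : 1 ≤ N) (t : ℕ) (ht : 1 ≤ t) :
    (!![1, 1; 1, 2] : Matrix (Fin 2) (Fin 2) (ZMod N)) ^ t = 1 ↔
      (Nat.fib (2 * t) : ZMod N) = 0 ∧ (Nat.fib (2 * t - 1) : ZMod N) = 1 := by
  have hG : (!![1, 1; 1, 2] : Matrix (Fin 2) (Fin 2) (ZMod N)) =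
      (!![0, 1; 1, 1]) ^ 2 := by
    ext i j
    fin_cases i <;> fin_cases j <;> simp [pow_two, Matrix.mul_apply, Fin.sum_univ_two] <;> norm_num
  rw [hG, ← pow_mul]
  have h1 : 2 * t = (2 * t - 1) + 1 := by omega
  rw [h1, fibG_pow]
  have h2 : (2 * t - 1) + 2 = 2 * t + 1 := by omega
  rw [← h1, h2]
  have hfib : (Nat.fib (2 * t + 1) : ZMod N) = Nat.fib (2 * t) + Nat.fib (2 * t - 1) := by
    have : Nat.fib (2 * t + 1) = Nat.fib (2 * t) + Nat.fib (2 * t - 1) := by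
      conv_lhs => rw [show 2 * t + 1 = (2 * t - 1) + 2 by omega, Nat.fib_add_two, ← h1]
      omega
    rw [this]; push_cast; ring
  constructor
  · intro h
    have h00 := congrFun (congrFun h 0) 0
    have h01 := congrFun (congrFun h 0) 1
    simp [Matrix.one_apply] at h00 h01
    exact ⟨h01, h00⟩
  · rintro ⟨h0, h1'⟩
    ext i j
    fin_cases i <;> fin_cases j <;> simp [Matrix.one_apply, h0, h1', hfib]
end

section
/- For every natural number N ≥ 3 there exists a positive natural number M with M ≤ N²/2 such that !![1, 1; 1, 2]^M = 1 as matrices over ZMod N. In particular, the period of Arnold's discrete cat map on an N×N grid (the least such positive M) is at most N²/2. -/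
theorem cat_map_period_le (N : ℕ) (hN : 3 ≤ N) :
    ∃ M : ℕ, 0 < M ∧ M ≤ N ^ 2 / 2 ∧
      (!![1, 1; 1, 2] : Matrix (Fin 2) (Fin 2) (ZMod N)) ^ M = 1 := by
  haveI : NeZero N := ⟨by omega⟩
  set R : Matrix (Fin 2) (Fin 2) (ZMod N) := !![0, 1; 1, 1] with hR
  have hmul1 : R * !![-1, 1; 1, 0] = 1 := by
    ext i j
    fin_cases i <;> fin_cases j <;>
      simp [hR, Matrix.mul_apply, Fin.sum_univ_two, Matrix.one_apply]
  have hmul2 : !![-1, 1; 1, 0] * R = 1 := by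
    ext i j
    fin_cases i <;> fin_cases j <;>
      simp [hR, Matrix.mul_apply, Fin.sum_univ_two, Matrix.one_apply]
  set u : (Matrix (Fin 2) (Fin 2) (ZMod N))ˣ := ⟨R, !![-1, 1; 1, 0], hmul1, hmul2⟩ with hu
  set e : ℕ := orderOf u with he
  have hepos : 0 < e := orderOf_pos u
  have hue : u ^ e = 1 := pow_orderOf_eq_one u
  have hRe : R ^ e = 1 := by
    have := congrArg (Units.val) hue
    simpa [Units.val_pow_eq_pow_val] using this
  -- every power of R has the shape !![a, b; b, a + b]
  have hform : ∀ k : ℕ, ∃ a b : ZMod N, R ^ k = !![a, b; b, a + b] := by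
    intro k
    induction k with
    | zero =>
      refine ⟨1, 0, ?_⟩
      rw [pow_zero, Matrix.one_fin_two]
      norm_num
    | succ n ih =>
      obtain ⟨a, b, h⟩ := ih
      refine ⟨b, a + b, ?_⟩
      rw [pow_succ, h]
      ext i j
      fin_cases i <;> fin_cases j <;>
        simp [hR, Matrix.mul_apply, Fin.sum_univ_two]
  -- injection from Fin e into (ZMod N) × (ZMod N)
  have hinj : Function.Injective (fun k : Fin e =>
      ((R ^ (k : ℕ)) 0 0, (R ^ (k : ℕ)) 0 1)) := by
    intro i j hij
    obtain ⟨a, b, hi⟩ := hform (i : ℕ)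
    obtain ⟨a', b', hj⟩ := hform (j : ℕ)
    have h00 : (R ^ (i : ℕ)) 0 0 = (R ^ (j : ℕ)) 0 0 := congrArg Prod.fst hij
    have h01 : (R ^ (i : ℕ)) 0 1 = (R ^ (j : ℕ)) 0 1 := congrArg Prod.snd hij
    rw [hi, hj] at h00 h01
    simp at h00 h01
    have hRij : R ^ (i : ℕ) = R ^ (j : ℕ) := by rw [hi, hj, h00, h01]
    have huij : u ^ (i : ℕ) = u ^ (j : ℕ) :=
      Units.ext (by simpa [Units.val_pow_eq_pow_val] using hRij)
    have := pow_injOn_Iio_orderOf (x := u)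
      (Set.mem_Iio.2 i.2) (Set.mem_Iio.2 j.2) huij
    exact Fin.ext this
  have hcard : e ≤ N ^ 2 := by
    have := Fintype.card_le_of_injective _ hinj
    simpa [Fintype.card_prod, ZMod.card, sq] using this
  -- e is even since det R = -1
  have heven : Even e := by
    by_contra hodd
    rw [Nat.not_even_iff_odd] at hodd
    have hdet : (R.det) ^ e = 1 := by
      rw [← Matrix.det_pow, hRe, Matrix.det_one]
    have hdR : R.det = -1 := by simp [hR, Matrix.det_fin_two_of]
    rw [hdR, hodd.neg_one_pow] at hdet
    have h2 : ((2 : ℕ) : ZMod N) = 0 := by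
      push_cast
      linear_combination -hdet
    have hd := (ZMod.natCast_eq_zero_iff 2 N).1 h2
    have := Nat.le_of_dvd (by norm_num) hd
    omega
  obtain ⟨c, hc⟩ := heven
  have hc2 : e = 2 * c := by omega
  refine ⟨c, by omega, ?_, ?_⟩
  · have : c ≤ N ^ 2 / 2 := by
      have : 2 * c ≤ N ^ 2 := by omega
      omega
    exact this
  · have hA : (!![1, 1; 1, 2] : Matrix (Fin 2) (Fin 2) (ZMod N)) = R ^ 2 := by
      rw [pow_two]
      ext i j
      fin_cases i <;> fin_cases j <;>
        simp [hR, Matrix.mul_apply, Fin.sum_univ_two] <;> norm_num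
    rw [hA, ← pow_mul, ← hc2, hRe]
end

section
/- Let N ≥ 3 and let A₂ = !![1, 1; 1, 2] act on (ZMod N)² . For every point p ∈ (ZMod N)², the orbit { A₂^t • p : t ∈ ℕ } of p under the discrete cat map has cardinality at most N²/2; in particular the orbit is a proper subset of (ZMod N)², so no orbit visits every point of the grid (an image is not dense in itself under the discrete cat map). -/
lemma cat_pow_form (N : ℕ) (t : ℕ) :
    ∃ f g : ZMod N, (!![1, 1; 1, 2] : Matrix (Fin 2) (Fin 2) (ZMod N)) ^ t
      = !![f + g, f; f, 2 * f + g] ∧ f ^ 2 + 3 * (f * g) + g ^ 2 = 1 := by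
  induction t with
  | zero =>
    refine ⟨0, 1, ?_, by ring⟩
    simp [pow_zero, Matrix.one_fin_two]
  | succ t ih =>
    obtain ⟨f, g, h1, h2⟩ := ih
    refine ⟨3 * f + g, -f, ?_, ?_⟩
    · rw [pow_succ, h1, Matrix.mul_fin_two]
      congr 1 <;> ring_nf
    · linear_combination h2

theorem orbit_not_dense (N : ℕ) (hN : 3 ≤ N) (p : Fin 2 → ZMod N) :
    Set.ncard {q : Fin 2 → ZMod N |
        ∃ t : ℕ, q = ((!![1, 1; 1, 2] : Matrix (Fin 2) (Fin 2) (ZMod N)) ^ t).mulVec p}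
      ≤ N ^ 2 / 2 ∧
    {q : Fin 2 → ZMod N |
        ∃ t : ℕ, q = ((!![1, 1; 1, 2] : Matrix (Fin 2) (Fin 2) (ZMod N)) ^ t).mulVec p}
      ≠ Set.univ := by
  haveI : NeZero N := ⟨by omega⟩
  set A : Matrix (Fin 2) (Fin 2) (ZMod N) := !![1, 1; 1, 2] with hA
  set O : Set (Fin 2 → ZMod N) := {q | ∃ t : ℕ, q = (A ^ t).mulVec p} with hO
  set S : Set (Matrix (Fin 2) (Fin 2) (ZMod N)) := {B | ∃ t : ℕ, B = A ^ t} with hS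
  set Q : ZMod N × ZMod N → ZMod N := fun x => x.1 ^ 2 + 3 * (x.1 * x.2) + x.2 ^ 2 with hQ
  set C : Set (ZMod N × ZMod N) := {x | Q x = 1} with hC
  set C' : Set (ZMod N × ZMod N) := {x | Q x = -1} with hC'
  -- O is the image of S
  have hOS : O = (fun B => B.mulVec p) '' S := by
    ext q
    constructor
    · rintro ⟨t, rfl⟩; exact ⟨A ^ t, ⟨t, rfl⟩, rfl⟩
    · rintro ⟨B, ⟨t, rfl⟩, rfl⟩; exact ⟨t, rfl⟩
  have h1 : O.ncard ≤ S.ncard := by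
    rw [hOS]; exact Set.ncard_image_le S.toFinite
  -- S injects into C via ψ
  set ψ : Matrix (Fin 2) (Fin 2) (ZMod N) → ZMod N × ZMod N :=
    fun B => (B 0 1, B 0 0 - B 0 1) with hψ
  have hform : ∀ B ∈ S, ∃ f g : ZMod N,
      B = !![f + g, f; f, 2 * f + g] ∧ f ^ 2 + 3 * (f * g) + g ^ 2 = 1 := by
    rintro B ⟨t, rfl⟩; exact cat_pow_form N t
  have hψinj : Set.InjOn ψ S := by
    intro B₁ hB₁ B₂ hB₂ h
    obtain ⟨f₁, g₁, rfl, -⟩ := hform B₁ hB₁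
    obtain ⟨f₂, g₂, rfl, -⟩ := hform B₂ hB₂
    simp [hψ, Prod.ext_iff] at h
    obtain ⟨hf, hg⟩ := h
    rw [hf, hg]
  have hψsub : ψ '' S ⊆ C := by
    rintro x ⟨B, hB, rfl⟩
    obtain ⟨f, g, rfl, hfg⟩ := hform B hB
    simp [hψ, hC, hQ]
    linear_combination hfg
  have h2 : S.ncard ≤ C.ncard := by
    calc S.ncard = (ψ '' S).ncard := (Set.ncard_image_of_injOn hψinj).symm
    _ ≤ C.ncard := Set.ncard_le_ncard hψsub C.toFinite
  -- C injects into C' via s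
  set s : ZMod N × ZMod N → ZMod N × ZMod N :=
    fun x => (x.1 + x.2, -x.1 - 2 * x.2) with hs
  have hsinj : Function.Injective s := by
    intro x y h
    simp only [hs, Prod.mk.injEq] at h
    obtain ⟨h1, h2⟩ := h
    have e1 : x.1 = y.1 := by linear_combination 2 * h1 + h2
    have e2 : x.2 = y.2 := by linear_combination -h1 - h2
    exact Prod.ext e1 e2
  have hssub : s '' C ⊆ C' := by
    rintro x ⟨y, hy, rfl⟩
    simp only [hC, hQ, Set.mem_setOf_eq] at hy
    simp only [hs, hC', hQ, Set.mem_setOf_eq]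
    linear_combination -hy
  have hdisj : Disjoint C C' := by
    rw [Set.disjoint_left]
    intro x hx hx'
    simp only [hC, hQ, Set.mem_setOf_eq] at hx
    simp only [hC', hQ, Set.mem_setOf_eq] at hx'
    have h20 : (2 : ZMod N) = 0 := by linear_combination hx' - hx
    have : (N : ℕ) ∣ 2 := by
      have := (ZMod.natCast_eq_zero_iff 2 N).mp (by exact_mod_cast h20)
      exact this
    have := Nat.le_of_dvd (by norm_num) this
    omega
  have hcard : Nat.card (ZMod N × ZMod N) = N ^ 2 := by
    simp [Nat.card_eq_fintype_card, ZMod.card]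
    ring
  have h3 : C.ncard ≤ N ^ 2 / 2 := by
    rw [Nat.le_div_iff_mul_le (by norm_num)]
    have hCC' : C.ncard ≤ C'.ncard := by
      calc C.ncard = (s '' C).ncard := (Set.ncard_image_of_injective C hsinj).symm
      _ ≤ C'.ncard := Set.ncard_le_ncard hssub C'.toFinite
    have hunion : C.ncard + C'.ncard ≤ N ^ 2 := by
      rw [← Set.ncard_union_eq hdisj C.toFinite C'.toFinite]
      calc (C ∪ C').ncard ≤ (Set.univ : Set (ZMod N × ZMod N)).ncard :=
            Set.ncard_le_ncard (Set.subset_univ _) Set.finite_univ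
      _ = N ^ 2 := by rw [Set.ncard_univ, hcard]
    calc C.ncard * 2 ≤ C.ncard + C'.ncard := by omega
    _ ≤ N ^ 2 := hunion
  have hmain : O.ncard ≤ N ^ 2 / 2 := le_trans h1 (le_trans h2 h3)
  refine ⟨hmain, ?_⟩
  intro huniv
  have : O.ncard = N ^ 2 := by
    rw [huniv, Set.ncard_univ]
    simp [Nat.card_eq_fintype_card, ZMod.card]
  rw [this] at hmain
  have : N ^ 2 / 2 < N ^ 2 := Nat.div_lt_self (by positivity) (by norm_num)
  omega
end

section
/- For every natural number s ≥ 1, if N = 5^s then the period of Arnold's discrete cat map on an N×N grid equals 2N; that is, the least positive integer M with !![1,1;1,2]^M = 1 over ZMod (5^s) is M = 2·5^s. -/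
namespace CatMapFive

abbrev R := Matrix (Fin 2) (Fin 2) ℤ

def A : R := !![1,1;1,2]
def B₁ : R := !![1,3;3,4]

lemma hA2 : A^2 = 1 + B₁ := by
  norm_num [A, B₁, pow_two, Matrix.mul_fin_two, Matrix.one_fin_two, ← Matrix.ext_iff,
    Fin.forall_fin_two, Matrix.smul_apply, Matrix.add_apply, Matrix.one_apply]

lemma hB1sq (E : R) : (B₁ + (5:ℤ) • E)^2
    = (5:ℤ) • (B₁ + 1 + B₁*E + E*B₁ + (5:ℤ) • E^2) := by
  have h : B₁^2 = (5:ℤ) • (B₁ + 1) := by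
    norm_num [B₁, pow_two, Matrix.mul_fin_two, Matrix.one_fin_two, ← Matrix.ext_iff,
      Fin.forall_fin_two, Matrix.smul_apply, Matrix.add_apply, Matrix.one_apply,
      ← Matrix.diagonal_ofNat, Matrix.diagonal_apply]
  have e : (B₁ + (5:ℤ) • E)^2
      = B₁^2 + ((5:ℤ) • (B₁*E) + (5:ℤ) • (E*B₁) + (25:ℤ) • (E*E)) := by
    simp only [pow_two, add_mul, mul_add, smul_mul_assoc, mul_smul_comm, smul_smul]
    match_scalars <;> ring
  rw [e, h, ← pow_two]
  match_scalars <;> ring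

lemma ring5 {S : Type*} [Ring S] (X Y : S) (h : X^2 = 5*Y) :
    (1+X)^5 = 1 + 5*X + 50*Y + 50*(X*Y) + 125*Y^2 + 25*(Y^2*X) := by
  have e : (1+X)^5 = 1 + 5*X + 10*X^2 + 10*(X*X^2) + 5*(X^2*X^2) + X^2*X^2*X := by noncomm_ring
  rw [e, h]; noncomm_ring

lemma invariant : ∀ s : ℕ, ∃ B E : R, A^(2*5^s) = 1 + ((5:ℤ)^s) • B ∧ B = B₁ + (5:ℤ) • E := by
  intro s
  induction s with
  | zero => exact ⟨B₁, 0, by simpa using hA2, by simp⟩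
  | succ s ih =>
    obtain ⟨B, E, hAB, hBE⟩ := ih
    set C : R := B₁ + 1 + B₁*E + E*B₁ + (5:ℤ) • E^2 with hC
    have hB2 : B^2 = (5:ℤ) • C := by rw [hBE]; exact hB1sq E
    have five : (5:R) = ((5:ℤ):R) := by norm_num
    have hX2 : ((5:ℤ)^s • B)^2 = 5 * ((5:ℤ)^(2*s) • C) := by
      rw [smul_pow, hB2, five, ← zsmul_eq_mul, smul_smul, smul_smul]
      match_scalars <;> ring
    have key : A^(2*5^(s+1)) = (1 + (5:ℤ)^s • B)^5 := by
      rw [← hAB, ← pow_mul]; ring_nf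
    refine ⟨B + (5:ℤ) • ((2*5^s:ℤ) • C + (2*5^(2*s):ℤ) • (B*C) + (5^(3*s+1):ℤ) • C^2
        + (5^(4*s):ℤ) • (C^2*B)),
      E + ((2*5^s:ℤ) • C + (2*5^(2*s):ℤ) • (B*C) + (5^(3*s+1):ℤ) • C^2 + (5^(4*s):ℤ) • (C^2*B)),
      ?_, by rw [hBE]; abel⟩
    rw [key, ring5 _ _ hX2]
    rw [five, show (50:R) = ((50:ℤ):R) from by norm_num, show (125:R) = ((125:ℤ):R) from by
      norm_num, show (25:R) = ((25:ℤ):R) from by norm_num]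
    simp only [← zsmul_eq_mul, smul_mul_assoc, mul_smul_comm, smul_pow, smul_smul, smul_add]
    match_scalars <;> ring

section N

variable (s : ℕ)

noncomputable def φ : R →+* Matrix (Fin 2) (Fin 2) (ZMod (5^s)) :=
  (Int.castRingHom (ZMod (5^s))).mapMatrix

lemma hφA : φ s A = (!![1,1;1,2] : Matrix (Fin 2) (Fin 2) (ZMod (5^s))) := by
  ext i j
  fin_cases i <;> fin_cases j <;>
    simp [φ, A, RingHom.mapMatrix_apply, Matrix.map_apply]

lemma fact1 : (!![1,1;1,2] : Matrix (Fin 2) (Fin 2) (ZMod (5^s))) ^ (2*5^s) = 1 := by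
  obtain ⟨B, E, hAB, -⟩ := invariant s
  have hz : ((5:ℤ)^s • (φ s B)) = 0 := by
    rw [← Int.cast_smul_eq_zsmul (ZMod (5^s))]
    have h5 : (((5:ℤ)^s : ℤ) : ZMod (5^s)) = 0 := by
      push_cast
      exact_mod_cast ZMod.natCast_self (5^s)
    rw [h5, zero_smul]
  calc (!![1,1;1,2] : Matrix (Fin 2) (Fin 2) (ZMod (5^s))) ^ (2*5^s)
      = φ s (A ^ (2*5^s)) := by rw [map_pow, hφA]
    _ = 1 := by rw [hAB, map_add, map_one, map_zsmul, hz, add_zero]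

lemma fact2 (t : ℕ) :
    (!![1,1;1,2] : Matrix (Fin 2) (Fin 2) (ZMod (5^(t+1)))) ^ (2*5^t) ≠ 1 := by
  obtain ⟨B, E, hAB, hBE⟩ := invariant t
  intro hcon
  have h1 : φ (t+1) (A ^ (2*5^t)) = 1 := by rw [map_pow, hφA, hcon]
  have h2 : ((((A ^ (2*5^t)) 0 1 : ℤ)) : ZMod (5^(t+1))) = 0 := by
    have := congrFun (congrFun h1 0) 1
    simpa [φ, RingHom.mapMatrix_apply, Matrix.map_apply, Matrix.one_apply] using this
  have h3 : (A ^ (2*5^t)) 0 1 = 5^t * (3 + 5 * E 0 1) := by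
    rw [hAB, hBE, Matrix.add_apply, Matrix.smul_apply, Matrix.add_apply, Matrix.smul_apply,
      Matrix.one_apply_ne (by decide)]
    simp [B₁, smul_eq_mul]

  rw [h3, ZMod.intCast_zmod_eq_zero_iff_dvd] at h2
  have h4 : ((5:ℤ)^(t+1)) ∣ 5^t * (3 + 5 * E 0 1) := by exact_mod_cast h2
  have h5 : (5:ℤ) ∣ 3 + 5 * E 0 1 := by
    have hpt : (5:ℤ)^t ≠ 0 := by positivity
    rw [pow_succ] at h4
    exact (mul_dvd_mul_iff_left hpt).mp h4
  omega

lemma fivepow_mod (t : ℕ) : 5^(t+1) % 10 = 5 := by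
  induction t with
  | zero => rfl
  | succ t ih =>
    have : 5^(t+1+1) = 5 * 5^(t+1) := by ring
    omega

lemma fact3 (hs : 1 ≤ s) :
    (!![1,1;1,2] : Matrix (Fin 2) (Fin 2) (ZMod (5^s))) ^ (5^s) ≠ 1 := by
  intro hcon
  have hdvd : (5:ℕ) ∣ 5^s := dvd_pow_self 5 (by omega)
  let ψ : Matrix (Fin 2) (Fin 2) (ZMod (5^s)) →+* Matrix (Fin 2) (Fin 2) (ZMod 5) :=
    (ZMod.castHom hdvd (ZMod 5)).mapMatrix
  have hψ : ψ (!![1,1;1,2] : Matrix (Fin 2) (Fin 2) (ZMod (5^s)))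
      = (!![1,1;1,2] : Matrix (Fin 2) (Fin 2) (ZMod 5)) := by
    ext i j
    fin_cases i <;> fin_cases j <;>
      simp [ψ, RingHom.mapMatrix_apply, Matrix.map_apply, map_ofNat, ZMod.cast_one hdvd]
  have h5 : (!![1,1;1,2] : Matrix (Fin 2) (Fin 2) (ZMod 5)) ^ (5^s) = 1 := by
    rw [← hψ, ← map_pow, hcon, map_one]
  obtain ⟨t, rfl⟩ : ∃ t, s = t+1 := ⟨s-1, by omega⟩
  obtain ⟨q, hq⟩ : ∃ q, 5^(t+1) = 10*q + 5 := ⟨5^(t+1)/10, by have := fivepow_mod t; omega⟩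
  rw [hq, pow_add, pow_mul] at h5
  have h10 : (!![1,1;1,2] : Matrix (Fin 2) (Fin 2) (ZMod 5)) ^ 10 = 1 := by decide
  have hne : (!![1,1;1,2] : Matrix (Fin 2) (Fin 2) (ZMod 5)) ^ 5 ≠ 1 := by decide
  rw [h10, one_pow, one_mul] at h5
  exact hne h5

end N

end CatMapFive

theorem cat_map_period_five_pow (s : ℕ) (hs : 1 ≤ s) :
    IsLeast {M : ℕ | 0 < M ∧
        (!![1, 1; 1, 2] : Matrix (Fin 2) (Fin 2) (ZMod (5 ^ s))) ^ M = 1}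
      (2 * 5 ^ s) := by
  obtain ⟨t, rfl⟩ : ∃ t, s = t+1 := ⟨s-1, by omega⟩
  constructor
  · exact ⟨by positivity, CatMapFive.fact1 (t+1)⟩
  · rintro M ⟨hM, hpow⟩
    set Mz := (!![1, 1; 1, 2] : Matrix (Fin 2) (Fin 2) (ZMod (5 ^ (t+1)))) with hMz
    set d := orderOf Mz with hd
    have hd2 : d ∣ 2*5^(t+1) := orderOf_dvd_of_pow_eq_one (CatMapFive.fact1 (t+1))
    have hdM : d ∣ M := orderOf_dvd_of_pow_eq_one hpow
    have hdeq : d = 2*5^(t+1) := by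
      obtain ⟨k, hk⟩ := hd2
      rcases eq_or_ne k 1 with rfl | hk1
      · omega
      obtain ⟨p, pp, hpk⟩ := Nat.exists_prime_and_dvd hk1
      obtain ⟨m, rfl⟩ := hpk
      exfalso
      have hp25 : p ∣ 2*5^(t+1) := Dvd.dvd.trans ⟨m, rfl⟩ ⟨d, by rw [hk]; ring⟩
      rcases (Nat.Prime.dvd_mul pp).1 hp25 with h2 | h5
      · have hp2 : p = 2 := (Nat.prime_dvd_prime_iff_eq pp Nat.prime_two).mp h2
        subst hp2
        have hdm : 5^(t+1) = d*m := by
          have he : d*(2*m) = 2*(d*m) := by ring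
          omega
        have : Mz ^ (5^(t+1)) = 1 := by
          have he := congrArg (fun n => Mz ^ n) hdm
          rw [he, pow_mul, pow_orderOf_eq_one, one_pow]
        exact CatMapFive.fact3 (t+1) (by omega) this
      · have hp5 : p = 5 :=
          (Nat.prime_dvd_prime_iff_eq pp (by norm_num)).mp (pp.dvd_of_dvd_pow h5)
        subst hp5
        have hdm : 2*5^t = d*m := by
          have h1 : 2*5^(t+1) = 2*5^t*5 := by ring
          have h2 : d*(5*m) = d*m*5 := by ring
          rw [h1, h2] at hk
          exact Nat.eq_of_mul_eq_mul_right (by norm_num) hk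
        have : Mz ^ (2*5^t) = 1 := by
          have he := congrArg (fun n => Mz ^ n) hdm
          rw [he, pow_mul, pow_orderOf_eq_one, one_pow]
        exact CatMapFive.fact2 t this
    rw [← hdeq]
    exact Nat.le_of_dvd hM hdM
end

section
/- For every natural number s ≥ 1, if N = 2·5^s then the period of Arnold's discrete cat map on an N×N grid equals 3N; that is, the least positive integer M with !![1,1;1,2]^M = 1 over ZMod (2·5^s) is M = 3·(2·5^s) = 6·5^s. -/
open Matrix

private abbrev Az : Matrix (Fin 2) (Fin 2) ℤ := !![1,1;1,2]
private abbrev B0 : Matrix (Fin 2) (Fin 2) ℤ := !![1,3;3,4]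

private lemma expand5 (D : Matrix (Fin 2) (Fin 2) ℤ) :
    (1+D)^5 = 1 + (5:ℤ)•D + (10:ℤ)•D^2 + (10:ℤ)•D^3 + (5:ℤ)•D^4 + D^5 := by
  noncomm_ring

private lemma expand3 (D : Matrix (Fin 2) (Fin 2) ℤ) :
    (1+D)^3 = 1 + (3:ℤ)•D + (3:ℤ)•D^2 + D^3 := by
  noncomm_ring

private lemma key : ∀ k : ℕ, ∃ C : Matrix (Fin 2) (Fin 2) ℤ,
    Az ^ (10 * 5^k) = 1 + ((5:ℤ)^(k+1)) • (B0 + (5:ℤ) • C) := by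
  intro k
  induction k with
  | zero =>
    refine ⟨!![167,270;270,437], ?_⟩
    have : Az ^ (10 * 5 ^ 0) = !![4181,6765;6765,10946] := by
      norm_num [pow_succ, Matrix.mul_fin_two]
    rw [this]
    ext i j
    fin_cases i <;> fin_cases j <;> simp
  | succ k ih =>
    obtain ⟨C, hC⟩ := ih
    set E := B0 + (5:ℤ) • C with hE
    refine ⟨C + (2*5^k : ℤ)•E^2 + (2*5^(2*k+1) : ℤ)•E^3 + ((5:ℤ)^(3*k+2))•E^4 + ((5:ℤ)^(4*k+2))•E^5, ?_⟩
    have h1 : Az ^ (10 * 5^(k+1)) = (1 + ((5:ℤ)^(k+1)) • E)^5 := by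
      rw [show 10*5^(k+1) = (10*5^k)*5 by ring, pow_mul, hC]
    rw [h1, expand5]
    simp only [smul_pow]
    module

private lemma pow3 : ∀ m : ℕ, ∃ H : Matrix (Fin 2) (Fin 2) ℤ, Az ^ (3*m) = 1 + (2:ℤ) • H := by
  intro m
  induction m with
  | zero => exact ⟨0, by simp⟩
  | succ m ih =>
    obtain ⟨H, hH⟩ := ih
    have hA3 : Az ^ 3 = 1 + (2:ℤ) • (!![2,4;4,6] : Matrix (Fin 2) (Fin 2) ℤ) := by
      have : Az ^ 3 = !![5,8;8,13] := by norm_num [pow_succ, Matrix.mul_fin_two]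
      rw [this]; ext i j; fin_cases i <;> fin_cases j <;> simp
    refine ⟨H + !![2,4;4,6] + (2:ℤ) • (H * !![2,4;4,6]), ?_⟩
    rw [show 3*(m+1) = 3*m + 3 by ring, pow_add, hH, hA3]
    noncomm_ring

private lemma mapA (n : ℕ) :
    (Int.castRingHom (ZMod n)).mapMatrix Az = !![1,1;1,2] := by
  ext i j
  fin_cases i <;> fin_cases j <;>
    simp [RingHom.mapMatrix_apply, Matrix.map_apply]

private lemma map_int_smul (n : ℕ) (z : ℤ) (M : Matrix (Fin 2) (Fin 2) ℤ) :
    (Int.castRingHom (ZMod n)).mapMatrix (z • M)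
      = (z : ZMod n) • (Int.castRingHom (ZMod n)).mapMatrix M := by
  ext i j
  simp only [RingHom.mapMatrix_apply, Matrix.map_apply, Matrix.smul_apply, smul_eq_mul,
    Int.cast_mul, Int.coe_castRingHom]

private lemma entry00 (z : ℤ) (C : Matrix (Fin 2) (Fin 2) ℤ) :
    (1 + z • (B0 + (5:ℤ) • C)) 0 0 = 1 + z * (1 + 5 * C 0 0) := by
  simp only [Matrix.add_apply, Matrix.smul_apply, smul_eq_mul, Matrix.one_apply_eq]
  norm_num [B0]

private lemma hga (n : ℕ) (h5dvd : 5 ∣ n) :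
    (ZMod.castHom h5dvd (ZMod 5)).mapMatrix (!![1,1;1,2] : Matrix (Fin 2) (Fin 2) (ZMod n))
      = !![1,1;1,2] := by
  ext i j
  fin_cases i <;> fin_cases j <;>
    simp [RingHom.mapMatrix_apply, Matrix.map_apply, -ZMod.castHom_apply, _root_.map_one,
      map_ofNat]

private lemma order5 (t : ℕ) (M : ℕ)
    (hM : (!![1,1;1,2] : Matrix (Fin 2) (Fin 2) (ZMod (5^(t+1))))^M = 1) :
    2*5^(t+1) ∣ M := by
  set n := 5^(t+1) with hn
  set f := Int.castRingHom (ZMod n) with hf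
  have hmap : ∀ K, (!![1,1;1,2] : Matrix (Fin 2) (Fin 2) (ZMod n)) ^ K
      = f.mapMatrix (Az ^ K) := fun K => by
    rw [map_pow, mapA]
  have hzero : (((5:ℤ)^(t+1) : ℤ) : ZMod n) = 0 := by
    rw [show ((5:ℤ)^(t+1)) = ((5^(t+1):ℕ):ℤ) by push_cast; ring, Int.cast_natCast, hn,
      ZMod.natCast_self]
  have h10t : (!![1,1;1,2] : Matrix (Fin 2) (Fin 2) (ZMod n)) ^ (10*5^t) = 1 := by
    obtain ⟨C, hC⟩ := key t
    rw [hmap, hC, map_add, _root_.map_one, map_int_smul, hzero, zero_smul, add_zero]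
  have h5dvd : (5:ℕ) ∣ n := hn ▸ dvd_pow_self 5 (Nat.succ_ne_zero t)
  have hM5 : (!![1,1;1,2] : Matrix (Fin 2) (Fin 2) (ZMod 5))^M = 1 := by
    rw [← hga n h5dvd, ← map_pow, hM, _root_.map_one]
  have h10M : 10 ∣ M := by
    have hnot : ∀ r, r < 10 → 0 < r →
        (!![1,1;1,2] : Matrix (Fin 2) (Fin 2) (ZMod 5))^r ≠ 1 := by decide
    have h10 : (!![1,1;1,2] : Matrix (Fin 2) (Fin 2) (ZMod 5))^10 = 1 := by decide
    have hmod := pow_eq_pow_mod M h10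
    rcases Nat.eq_zero_or_pos (M % 10) with h0 | hpos
    · exact Nat.dvd_of_mod_eq_zero h0
    · exact absurd (by rw [← hmod]; exact hM5)
        (hnot _ (Nat.mod_lt _ (by norm_num)) hpos)
  obtain ⟨m, rfl⟩ := h10M
  set X := (!![1,1;1,2] : Matrix (Fin 2) (Fin 2) (ZMod n)) ^ 10 with hX
  have hXm : X ^ m = 1 := by rw [hX, ← pow_mul]; exact hM
  have hXt : X ^ 5^t = 1 := by rw [hX, ← pow_mul]; exact h10t
  obtain ⟨j, hj, hdj⟩ := (Nat.dvd_prime_pow (by norm_num)).1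
    (orderOf_dvd_of_pow_eq_one hXt)
  have hXj : (!![1,1;1,2] : Matrix (Fin 2) (Fin 2) (ZMod n)) ^ (10 * 5^j) = 1 := by
    rw [pow_mul, ← hX, ← hdj]; exact pow_orderOf_eq_one X
  have htj : t ≤ j := by
    by_contra hlt
    push_neg at hlt
    obtain ⟨C, hC⟩ := key j
    have hent : (Az ^ (10*5^j)) 0 0 = 1 + 5^(j+1) * (1 + 5 * C 0 0) := by
      rw [hC]; exact entry00 _ C
    have h00 : ((((Az ^ (10*5^j)) 0 0 : ℤ)) : ZMod n) = 1 := by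
      have h1 : f.mapMatrix (Az ^ (10*5^j)) = 1 := by rw [← hmap]; exact hXj
      have h2 := congrFun (congrFun h1 0) 0
      simpa [RingHom.mapMatrix_apply, Matrix.map_apply, hf, Matrix.one_apply] using h2
    rw [hent] at h00
    have hc0 : ((5^(j+1) * (1 + 5 * C 0 0) : ℤ) : ZMod n) = 0 := by
      push_cast at h00 ⊢
      linear_combination h00
    rw [ZMod.intCast_zmod_eq_zero_iff_dvd] at hc0
    obtain ⟨k, hk⟩ := hc0
    rw [show ((n:ℕ):ℤ) = 5^(j+1) * 5^(t-j) by
      rw [hn]; push_cast; rw [← pow_add]; congr 1; omega, mul_assoc] at hk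
    have hcc := mul_left_cancel₀ (pow_ne_zero (j+1) (by norm_num : (5:ℤ) ≠ 0)) hk
    rw [show (5:ℤ)^(t-j) = 5 * 5^(t-j-1) by rw [← pow_succ']; congr 1; omega,
      mul_assoc] at hcc
    generalize (5:ℤ)^(t-j-1) * k = w at hcc
    omega
  have h5m : 5^t ∣ m := by
    rw [← le_antisymm hj htj, ← hdj]
    exact orderOf_dvd_of_pow_eq_one hXm
  obtain ⟨q, rfl⟩ := h5m
  exact ⟨q, by ring⟩

private lemma hgaGen (n m : ℕ) (h : m ∣ n) :
    (ZMod.castHom h (ZMod m)).mapMatrix (!![1,1;1,2] : Matrix (Fin 2) (Fin 2) (ZMod n))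
      = !![1,1;1,2] := by
  ext i j
  fin_cases i <;> fin_cases j <;>
    simp [RingHom.mapMatrix_apply, Matrix.map_apply, -ZMod.castHom_apply, _root_.map_one,
      map_ofNat]

private lemma order2 (n : ℕ) (h2 : 2 ∣ n) (M : ℕ)
    (hM : (!![1,1;1,2] : Matrix (Fin 2) (Fin 2) (ZMod n))^M = 1) : 3 ∣ M := by
  have hM2 : (!![1,1;1,2] : Matrix (Fin 2) (Fin 2) (ZMod 2))^M = 1 := by
    rw [← hgaGen n 2 h2, ← map_pow, hM, _root_.map_one]
  have hnot : ∀ r, r < 3 → 0 < r →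
      (!![1,1;1,2] : Matrix (Fin 2) (Fin 2) (ZMod 2))^r ≠ 1 := by decide
  have h3 : (!![1,1;1,2] : Matrix (Fin 2) (Fin 2) (ZMod 2))^3 = 1 := by decide
  have hmod := pow_eq_pow_mod M h3
  rcases Nat.eq_zero_or_pos (M % 3) with h0 | hpos
  · exact Nat.dvd_of_mod_eq_zero h0
  · exact absurd (by rw [← hmod]; exact hM2)
      (hnot _ (Nat.mod_lt _ (by norm_num)) hpos)

private lemma memb (t : ℕ) :
    (!![1,1;1,2] : Matrix (Fin 2) (Fin 2) (ZMod (2*5^(t+1))))^(3*(2*5^(t+1))) = 1 := by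
  set N := 2*5^(t+1) with hN
  set f := Int.castRingHom (ZMod N) with hf
  obtain ⟨C, hC⟩ := key t
  set E := B0 + (5:ℤ) • C with hE
  set F := (3:ℤ)•E + (3*5^(t+1):ℤ)•E^2 + ((5:ℤ)^(2*t+2))•E^3 with hF
  have hcube : Az ^ (3*(2*5^(t+1))) = 1 + ((5:ℤ)^(t+1)) • F := by
    rw [show 3*(2*5^(t+1)) = (10*5^t)*3 by ring, pow_mul, hC, expand3, hF]
    simp only [smul_pow]
    module
  obtain ⟨H, hH⟩ := pow3 (2*5^(t+1))
  have hEq : ((5:ℤ)^(t+1)) • F = (2:ℤ) • H := add_left_cancel (hcube.symm.trans hH)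
  have hdvd : ∀ i j, ((N : ℕ) : ℤ) ∣ ((2:ℤ)•H) i j := by
    intro i j
    have h2 : (2:ℤ) ∣ ((2:ℤ)•H) i j := ⟨H i j, by simp [Matrix.smul_apply]⟩
    have h5 : (5:ℤ)^(t+1) ∣ ((2:ℤ)•H) i j := by
      rw [← hEq]; exact ⟨F i j, by simp [Matrix.smul_apply]⟩
    have cop : IsCoprime (2:ℤ) ((5:ℤ)^(t+1)) :=
      (Int.isCoprime_iff_gcd_eq_one.mpr (by norm_num)).pow_right
    have hmd := cop.mul_dvd h2 h5
    rw [hN]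
    push_cast
    exact hmd
  have hmain : f.mapMatrix (Az ^ (3*(2*5^(t+1)))) = 1 := by
    rw [hH, map_add, _root_.map_one]
    have hz : f.mapMatrix ((2:ℤ)•H) = 0 := by
      ext i j
      simp only [RingHom.mapMatrix_apply, Matrix.map_apply, hf, Int.coe_castRingHom,
        Matrix.zero_apply]
      rw [ZMod.intCast_zmod_eq_zero_iff_dvd]
      exact hdvd i j
    rw [hz, add_zero]
  have hmap : (!![1,1;1,2] : Matrix (Fin 2) (Fin 2) (ZMod N)) ^ (3*(2*5^(t+1)))
      = f.mapMatrix (Az ^ (3*(2*5^(t+1)))) := by rw [map_pow, mapA]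
  rw [hmap, hmain]

theorem cat_map_period_two_mul_five_pow (s : ℕ) (hs : 1 ≤ s) :
    IsLeast {M : ℕ | 0 < M ∧
        (!![1, 1; 1, 2] : Matrix (Fin 2) (Fin 2) (ZMod (2 * 5 ^ s))) ^ M = 1}
      (3 * (2 * 5 ^ s)) := by
  obtain ⟨t, rfl⟩ : ∃ t, s = t+1 := ⟨s-1, by omega⟩
  constructor
  · exact ⟨by positivity, memb t⟩
  · rintro M ⟨hM0, hM1⟩
    have h3 : 3 ∣ M := order2 (2*5^(t+1)) ⟨5^(t+1), rfl⟩ M hM1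
    have h5 : 2*5^(t+1) ∣ M := by
      have hdvd : (5^(t+1) : ℕ) ∣ 2*5^(t+1) := dvd_mul_left _ 2
      refine order5 t M ?_
      rw [← hgaGen (2*5^(t+1)) (5^(t+1)) hdvd, ← map_pow, hM1, _root_.map_one]
    have cop : Nat.Coprime 3 (2*5^(t+1)) :=
      Nat.Coprime.mul_right (by decide) (Nat.Coprime.pow_right _ (by decide))
    exact Nat.le_of_dvd hM0 (Nat.Coprime.mul_dvd_of_dvd_of_dvd cop h3 h5)
end
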